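/- There exists a constant c₁ ∈ (0,1], depending only on α and d, such that for all x, y ∈ ℤ^d with x ≠ y and every L¹-geodesic z_0, …, z_m from x to y one has c₁ · ρ_x(|x−y|) ≤ Σ_{i=0}^{m−1} μ_{z_i z_{i+1}}^{−1} ≤ c₁^{−1} · ρ_x(|x−y|). -/

import Mathlib

open scoped BigOperators

/-- ℓ∞ norm on ℤ^d, as a natural number. -/
def linf {d : ℕ} (x : Fin d → ℤ) : ℕ :=
  Finset.univ.sup fun i => (x i).natAbs

/-- ℓ¹ norm on ℤ^d, as a natural number. -/
def l1 {d : ℕ} (x : Fin d → ℤ) : ℕ :=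
  ∑ i, (x i).natAbs

/-- `ν x = (max(|x|,1))^α`. -/
noncomputable def nu (α : ℝ) {d : ℕ} (x : Fin d → ℤ) : ℝ :=
  ((max (linf x) 1 : ℕ) : ℝ) ^ α

/-- The conductance `μ x y = (max(|x|,|y|))^(-α)` if `|x-y|₁ = 1`, and `0` otherwise. -/
noncomputable def mu (α : ℝ) {d : ℕ} (x y : Fin d → ℤ) : ℝ :=
  if l1 (x - y) = 1 then ((max (linf x) (linf y) : ℕ) : ℝ) ^ (-α) else 0

/-- `z 0, …, z m` is a path: consecutive points are at ℓ¹-distance one. -/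
def IsPath {d : ℕ} (z : ℕ → Fin d → ℤ) (m : ℕ) : Prop :=
  ∀ i < m, l1 (z (i + 1) - z i) = 1

/-- The metric `ρ(x,y)`: `0` if `x = y`, otherwise the infimum of `∑ ν (z i)` over
paths from `x` to `y`. -/
noncomputable def rho (α : ℝ) {d : ℕ} (x y : Fin d → ℤ) : ℝ :=
  if x = y then 0
  else sInf {S : ℝ | ∃ (m : ℕ) (z : ℕ → Fin d → ℤ), IsPath z m ∧ z 0 = x ∧ z m = y ∧
    S = ∑ i ∈ Finset.range (m + 1), nu α (z i)}

/-- `ρ_x(r) = (max(|x|,r))^α · r`. -/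
noncomputable def rhox (α : ℝ) {d : ℕ} (x : Fin d → ℤ) (r : ℝ) : ℝ :=
  (max ((linf x : ℕ) : ℝ) r) ^ α * r

/-- `ρ_x⁻¹(r) = (max(|x|, r^{1/(1+α)}))^{-α} · r`, the inverse function of `ρ_x`. -/
noncomputable def rhoxInv (α : ℝ) {d : ℕ} (x : Fin d → ℤ) (r : ℝ) : ℝ :=
  (max ((linf x : ℕ) : ℝ) (r ^ (1 / (1 + α)))) ^ (-α) * r

/-- `V(x,r) = ν(B(x,r))`, the ν-volume of the ℓ∞-ball of radius `r` about `x`. -/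
noncomputable def V (α : ℝ) {d : ℕ} (x : Fin d → ℤ) (r : ℝ) : ℝ :=
  ∑' y : {y : Fin d → ℤ // ((linf (y - x) : ℕ) : ℝ) ≤ r}, nu α y.1

/-- `V_ρ(x,r) = ν(B_ρ(x,r))`, the ν-volume of the ρ-ball of radius `r` about `x`. -/
noncomputable def Vrho (α : ℝ) {d : ℕ} (x : Fin d → ℤ) (r : ℝ) : ℝ :=
  ∑' y : {y : Fin d → ℤ // rho α x y ≤ r}, nu α y.1

namespace Aux

lemma coord_le_linf {d : ℕ} (v : Fin d → ℤ) (i : Fin d) : (v i).natAbs ≤ linf v :=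
  Finset.le_sup (f := fun i => (v i).natAbs) (Finset.mem_univ i)

lemma linf_le {d : ℕ} (v : Fin d → ℤ) {n : ℕ} (h : ∀ i, (v i).natAbs ≤ n) : linf v ≤ n :=
  Finset.sup_le fun i _ => h i

lemma linf_le_l1 {d : ℕ} (v : Fin d → ℤ) : linf v ≤ l1 v :=
  linf_le v fun i => Finset.single_le_sum (f := fun i => (v i).natAbs)
    (fun _ _ => Nat.zero_le _) (Finset.mem_univ i)

lemma l1_le_d_mul_linf {d : ℕ} (v : Fin d → ℤ) : l1 v ≤ d * linf v := by
  have := Finset.sum_le_card_nsmul Finset.univ (fun i => (v i).natAbs) (linf v)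
    (fun i _ => coord_le_linf v i)
  simpa [l1, Finset.card_univ, mul_comm] using this

lemma l1_sub_comm {d : ℕ} (a b : Fin d → ℤ) : l1 (a - b) = l1 (b - a) := by
  unfold l1
  refine Finset.sum_congr rfl fun i _ => ?_
  have h : (a - b) i = -((b - a) i) := by simp only [Pi.sub_apply]; ring
  rw [h, Int.natAbs_neg]

lemma l1_triangle {d : ℕ} (a b c : Fin d → ℤ) : l1 (a - c) ≤ l1 (a - b) + l1 (b - c) := by
  unfold l1
  rw [← Finset.sum_add_distrib]
  refine Finset.sum_le_sum fun i _ => ?_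
  have h : (a - c) i = (a - b) i + (b - c) i := by simp only [Pi.sub_apply]; ring
  rw [h]; exact Int.natAbs_add_le _ _

lemma l1_sub_le {d : ℕ} (a b : Fin d → ℤ) : l1 (a - b) ≤ l1 a + l1 b := by
  unfold l1
  rw [← Finset.sum_add_distrib]
  refine Finset.sum_le_sum fun i _ => ?_
  have h : (a - b) i = a i + -(b i) := by simp only [Pi.sub_apply]; ring
  rw [h]
  exact (Int.natAbs_add_le _ _).trans (by rw [Int.natAbs_neg])

lemma linf_le_linf_add_l1 {d : ℕ} (a b : Fin d → ℤ) : linf a ≤ linf b + l1 (a - b) := by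
  refine linf_le a fun i => ?_
  have h : a i = b i + (a - b) i := by simp only [Pi.sub_apply]; ring
  calc (a i).natAbs ≤ (b i).natAbs + ((a - b) i).natAbs := by
        rw [h]; exact Int.natAbs_add_le _ _
    _ ≤ linf b + l1 (a - b) :=
        Nat.add_le_add (coord_le_linf b i) ((coord_le_linf _ i).trans (linf_le_l1 _))

lemma linf_sub_le {d : ℕ} (a b : Fin d → ℤ) : linf (a - b) ≤ linf a + linf b := by
  refine linf_le _ fun i => ?_
  have h : (a - b) i = a i + -(b i) := by simp only [Pi.sub_apply]; ring
  calc ((a - b) i).natAbs ≤ (a i).natAbs + (-(b i)).natAbs := by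
        rw [h]; exact Int.natAbs_add_le _ _
    _ ≤ linf a + linf b := by
        rw [Int.natAbs_neg]; exact Nat.add_le_add (coord_le_linf a i) (coord_le_linf b i)

lemma linf_pos {d : ℕ} {v : Fin d → ℤ} (hv : v ≠ 0) : 1 ≤ linf v := by
  by_contra h
  push_neg at h
  exact hv (funext fun i => by
    have h2 := coord_le_linf v i
    have h3 : (v i).natAbs = 0 := by omega
    show v i = 0
    simpa [Int.natAbs_eq_zero] using h3)

lemma path_l1_le {d : ℕ} {z : ℕ → Fin d → ℤ} {m : ℕ} (hz : IsPath z m) :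
    ∀ j k, j + k ≤ m → l1 (z (j + k) - z j) ≤ k := by
  intro j k
  induction k with
  | zero => intro _; simp [l1]
  | succ k ih =>
    intro hk
    have h1 : l1 (z (j + k + 1) - z (j + k)) = 1 := hz (j + k) (by omega)
    calc l1 (z (j + (k+1)) - z j) ≤ l1 (z (j + (k+1)) - z (j + k)) + l1 (z (j + k) - z j) :=
          l1_triangle _ _ _
      _ ≤ 1 + k := by
          have he : j + (k + 1) = j + k + 1 := by ring
          rw [he, h1]
          exact Nat.add_le_add_left (ih (by omega)) 1
      _ = k + 1 := by ring

lemma geodesic_l1_ge {d : ℕ} {z : ℕ → Fin d → ℤ} {m : ℕ} (hz : IsPath z m)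
    (hm : l1 (z m - z 0) = m) {i j : ℕ} (hj : j ≤ i) (hi : i ≤ m) :
    i - j ≤ l1 (z i - z j) := by
  have h1 : l1 (z m - z i) ≤ m - i := by
    have := path_l1_le hz i (m - i) (by omega)
    rwa [Nat.add_sub_cancel' hi] at this
  have h2 : l1 (z j - z 0) ≤ j := by
    have := path_l1_le hz 0 j (by omega)
    simpa using this
  have h3 : l1 (z m - z 0) ≤ l1 (z m - z i) + l1 (z i - z j) + l1 (z j - z 0) := by
    calc l1 (z m - z 0) ≤ l1 (z m - z i) + l1 (z i - z 0) := l1_triangle _ _ _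
      _ ≤ l1 (z m - z i) + (l1 (z i - z j) + l1 (z j - z 0)) :=
          Nat.add_le_add_left (l1_triangle _ _ _) _
      _ = _ := by ring
  omega

lemma K_pos {d : ℕ} {z : ℕ → Fin d → ℤ} {m : ℕ} (hz : IsPath z m) {i : ℕ} (hi : i < m) :
    1 ≤ max (linf (z i)) (linf (z (i+1))) := by
  by_contra h
  push_neg at h
  have h1 : linf (z i) = 0 := by omega
  have h2 : linf (z (i+1)) = 0 := by omega
  have hzi : z i = 0 := by
    by_contra hc; exact absurd h1 (by have := linf_pos hc; omega)
  have hzi1 : z (i+1) = 0 := by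
    by_contra hc; exact absurd h2 (by have := linf_pos hc; omega)
  have := hz i hi
  rw [hzi, hzi1] at this
  simp [l1] at this

lemma mu_inv_eq (α : ℝ) {d : ℕ} {z : ℕ → Fin d → ℤ} {m : ℕ} (hz : IsPath z m) {i : ℕ}
    (hi : i < m) :
    (mu α (z i) (z (i+1)))⁻¹ = ((max (linf (z i)) (linf (z (i+1))) : ℕ) : ℝ) ^ α := by
  have h1 : l1 (z i - z (i+1)) = 1 := by rw [l1_sub_comm]; exact hz i hi
  rw [mu, if_pos h1, Real.rpow_neg (by positivity), inv_inv]

end Aux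

open Aux

lemma bounds_pos (d : ℕ) (hd : 1 ≤ d) (α : ℝ) (hα0 : 0 ≤ α) :
    ∃ C : ℝ, 1 ≤ C ∧ ∀ x y : Fin d → ℤ, x ≠ y →
      ∀ (m : ℕ) (z : ℕ → Fin d → ℤ), IsPath z m → z 0 = x → z m = y → m = l1 (x - y) →
        C⁻¹ * rhox α x ((linf (x - y) : ℕ) : ℝ) ≤
            ∑ i ∈ Finset.range m, (mu α (z i) (z (i + 1)))⁻¹ ∧
        ∑ i ∈ Finset.range m, (mu α (z i) (z (i + 1)))⁻¹ ≤
            C * rhox α x ((linf (x - y) : ℕ) : ℝ) := by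
  set C : ℝ := max ((d:ℝ) * ((d:ℝ)+1)^α) ((4:ℝ)^(1+α)) with hCdef
  have hd1 : (1:ℝ) ≤ d := by exact_mod_cast hd
  have hC1 : 1 ≤ C := le_trans (Real.one_le_rpow (by norm_num) (by linarith)) (le_max_right _ _)
  have hCpos : 0 < C := by linarith
  refine ⟨C, hC1, ?_⟩
  intro x y hxy m z hpath hz0 hzm hm
  have hxy0 : x - y ≠ 0 := sub_ne_zero.mpr hxy
  set n := linf (x - y) with hn
  have hn1 : 1 ≤ n := linf_pos hxy0
  have hnm : n ≤ m := by rw [hm]; exact linf_le_l1 _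
  have hmd : m ≤ d * n := by rw [hm, hn]; exact l1_le_d_mul_linf _
  have hm1 : 1 ≤ m := le_trans hn1 hnm
  set M : ℝ := max ((linf x : ℕ) : ℝ) ((n : ℕ) : ℝ) with hM
  have hrhox : rhox α x ((n : ℕ) : ℝ) = M ^ α * n := rfl
  have hnR : (1:ℝ) ≤ (n:ℝ) := by exact_mod_cast hn1
  have hM1 : (1:ℝ) ≤ M := le_trans hnR (le_max_right _ _)
  have hMpos : (0:ℝ) < M := by linarith
  have hMx : ((linf x : ℕ) : ℝ) ≤ M := le_max_left _ _
  have hMn : ((n : ℕ) : ℝ) ≤ M := le_max_right _ _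
  have hsum : ∑ i ∈ Finset.range m, (mu α (z i) (z (i + 1)))⁻¹
      = ∑ i ∈ Finset.range m, ((max (linf (z i)) (linf (z (i+1))) : ℕ) : ℝ) ^ α :=
    Finset.sum_congr rfl fun i hi => mu_inv_eq α hpath (Finset.mem_range.mp hi)
  have hzx : ∀ i, i ≤ m → l1 (z i - x) ≤ i := by
    intro i hi
    have := path_l1_le hpath 0 i (by omega)
    simpa [hz0] using this
  have hzy : ∀ i, i ≤ m → l1 (y - z i) ≤ m - i := by
    intro i hi
    have := path_l1_le hpath i (m - i) (by omega)
    rwa [Nat.add_sub_cancel' hi, hzm] at this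
  rw [hsum, hrhox]
  constructor
  · -- lower bound
    set K := max (linf x) (linf y) with hKdef
    have h2K : n ≤ 2 * K := by
      have h1 := linf_sub_le x y
      rw [← hn] at h1
      omega
    have hM2K : M ≤ 2 * (K : ℝ) := by
      have hxK : ((linf x : ℕ) : ℝ) ≤ (K:ℝ) := by exact_mod_cast Nat.le_max_left _ _
      have hnK : ((n:ℕ):ℝ) ≤ 2*(K:ℝ) := by exact_mod_cast h2K
      exact max_le (by linarith [Nat.cast_nonneg (α := ℝ) K]) hnK
    set s := min m (K/2 + 1) with hs
    have hsm : s ≤ m := min_le_left _ _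
    have hs4 : n ≤ 4 * s := by omega
    have hsRn : (n:ℝ)/4 ≤ (s:ℝ) := by
      rw [div_le_iff₀ (by norm_num)]
      exact_mod_cast by omega
    have hC4 : C⁻¹ ≤ ((4:ℝ)^(1+α))⁻¹ :=
      inv_anti₀ (Real.rpow_pos_of_pos (by norm_num) _) (le_max_right _ _)
    have h44 : (4:ℝ)^(1+α) = 4 * 4^α := by
      rw [Real.rpow_add (by norm_num), Real.rpow_one]
    -- find s edges each with K-value ≥ M/4
    have key : ∃ t : Finset ℕ, t ⊆ Finset.range m ∧ t.card = s ∧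
        ∀ i ∈ t, M/4 ≤ ((max (linf (z i)) (linf (z (i+1))) : ℕ) : ℝ) := by
      rcases le_or_gt (linf y) (linf x) with hcase | hcase
      · refine ⟨Finset.range s, Finset.range_subset_range.mpr hsm, Finset.card_range s, ?_⟩
        intro i hi
        rw [Finset.mem_range] at hi
        have him : i ≤ m := by omega
        have h1 : linf x ≤ linf (z i) + l1 (x - z i) := linf_le_linf_add_l1 _ _
        have h2 : l1 (x - z i) ≤ i := by rw [l1_sub_comm]; exact hzx i him
        have hKx : K = linf x := max_eq_left hcase
        have hnat : K ≤ 2 * max (linf (z i)) (linf (z (i+1))) := by omega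
        have hnatR : (K:ℝ) ≤ 2 * ((max (linf (z i)) (linf (z (i+1))) : ℕ) : ℝ) := by
          exact_mod_cast hnat
        linarith
      · refine ⟨Finset.Ico (m - s) m, ?_, ?_, ?_⟩
        · intro i hi
          exact Finset.mem_range.mpr (Finset.mem_Ico.mp hi).2
        · rw [Nat.card_Ico]; omega
        · intro i hi
          rw [Finset.mem_Ico] at hi
          have him : i + 1 ≤ m := by omega
          have h1 : linf y ≤ linf (z (i+1)) + l1 (y - z (i+1)) := linf_le_linf_add_l1 _ _
          have h2 : l1 (y - z (i+1)) ≤ m - (i+1) := hzy (i+1) him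
          have hKy : K = linf y := max_eq_right hcase.le
          have hnat : K ≤ 2 * max (linf (z i)) (linf (z (i+1))) := by omega
          have hnatR : (K:ℝ) ≤ 2 * ((max (linf (z i)) (linf (z (i+1))) : ℕ) : ℝ) := by
            exact_mod_cast hnat
          linarith
    obtain ⟨t, hts, htcard, htedge⟩ := key
    have h5 : (s:ℝ) * (M/4)^α ≤ ∑ i ∈ t, ((max (linf (z i)) (linf (z (i+1))) : ℕ) : ℝ) ^ α := by
      have := Finset.card_nsmul_le_sum t
        (fun i => ((max (linf (z i)) (linf (z (i+1))) : ℕ) : ℝ) ^ α) ((M/4)^α)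
        (fun i hi => Real.rpow_le_rpow (by positivity) (htedge i hi) hα0)
      rwa [htcard, nsmul_eq_mul] at this
    have h6 : ∑ i ∈ t, ((max (linf (z i)) (linf (z (i+1))) : ℕ) : ℝ) ^ α ≤
        ∑ i ∈ Finset.range m, ((max (linf (z i)) (linf (z (i+1))) : ℕ) : ℝ) ^ α :=
      Finset.sum_le_sum_of_subset_of_nonneg hts (fun i _ _ => by positivity)
    have h7 : C⁻¹ * (M ^ α * ↑n) ≤ (s:ℝ) * (M/4)^α := by
      have hMα : (0:ℝ) < M ^ α := Real.rpow_pos_of_pos hMpos α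
      have h4α : (0:ℝ) < (4:ℝ)^α := Real.rpow_pos_of_pos (by norm_num) α
      calc C⁻¹ * (M ^ α * ↑n) ≤ ((4:ℝ)^(1+α))⁻¹ * (M ^ α * ↑n) := by
            apply mul_le_mul_of_nonneg_right hC4 (by positivity)
        _ = ((n:ℝ)/4) * (M^α / 4^α) := by rw [h44]; field_simp
        _ ≤ (s:ℝ) * (M^α / 4^α) := by
            apply mul_le_mul_of_nonneg_right hsRn (by positivity)
        _ = (s:ℝ) * (M/4)^α := by rw [Real.div_rpow hMpos.le (by norm_num)]
    linarith
  · -- upper bound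
    have hKle : ∀ i, i < m →
        ((max (linf (z i)) (linf (z (i+1))) : ℕ) : ℝ) ≤ ((d:ℝ)+1) * M := by
      intro i hi
      have h1 : linf (z i) ≤ linf x + l1 (z i - x) := linf_le_linf_add_l1 _ _
      have h2 : linf (z (i+1)) ≤ linf x + l1 (z (i+1) - x) := linf_le_linf_add_l1 _ _
      have h3 := hzx i (by omega)
      have h4 := hzx (i+1) (by omega)
      have h5 : (max (linf (z i)) (linf (z (i+1))) : ℕ) ≤ linf x + m := by omega
      have h5R : ((max (linf (z i)) (linf (z (i+1))) : ℕ) : ℝ) ≤ ((linf x : ℕ):ℝ) + (m:ℝ) := by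
        exact_mod_cast h5
      have hmR : (m:ℝ) ≤ (d:ℝ) * (n:ℝ) := by exact_mod_cast hmd
      have hdn : (d:ℝ) * (n:ℝ) ≤ (d:ℝ) * M := by
        apply mul_le_mul_of_nonneg_left hMn (by positivity)
      linarith
    calc ∑ i ∈ Finset.range m, ((max (linf (z i)) (linf (z (i+1))) : ℕ) : ℝ) ^ α
        ≤ ∑ _i ∈ Finset.range m, (((d:ℝ)+1) * M) ^ α := by
          refine Finset.sum_le_sum fun i hi => ?_
          exact Real.rpow_le_rpow (by positivity) (hKle i (Finset.mem_range.mp hi)) hα0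
      _ = (m:ℝ) * (((d:ℝ)+1) * M) ^ α := by
          rw [Finset.sum_const, Finset.card_range, nsmul_eq_mul]
      _ ≤ ((d:ℝ) * (n:ℝ)) * (((d:ℝ)+1) * M) ^ α := by
          apply mul_le_mul_of_nonneg_right (by exact_mod_cast hmd) (by positivity)
      _ = ((d:ℝ) * ((d:ℝ)+1)^α) * (M ^ α * (n:ℝ)) := by
          rw [Real.mul_rpow (by positivity) hMpos.le]; ring
      _ ≤ C * (M ^ α * (n:ℝ)) := by
          apply mul_le_mul_of_nonneg_right (le_max_left _ _) (by positivity)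

lemma rpow_step {α : ℝ} (hα : -1 < α) (hα0 : α < 0) (m : ℕ) :
    (1+α) * ((m:ℝ)+1)^α + (m:ℝ)^(1+α) ≤ ((m:ℝ)+1)^(1+α) := by
  set b : ℝ := (m:ℝ) + 1 with hbdef
  set a : ℝ := (m:ℝ) with hadef
  set p : ℝ := 1 + α with hpdef
  have hb : 0 < b := by positivity
  have ha0 : 0 ≤ a := by positivity
  set u : ℝ := a / b with hudef
  have hu0 : 0 ≤ u := by positivity
  have hub : u * b = a := by rw [hudef]; field_simp
  have h1mu : (1 - u) * b = 1 := by
    rw [sub_mul, hub, hbdef, hadef]; ring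
  have hp0 : 0 ≤ p := by rw [hpdef]; linarith
  have h1p0 : 0 ≤ 1 - p := by rw [hpdef]; linarith
  have hgm : u ^ p ≤ p * u + (1 - p) := by
    have := Real.geom_mean_le_arith_mean2_weighted hp0 h1p0 hu0 zero_le_one
      (by ring : p + (1 - p) = 1)
    simpa using this
  have hbp : (0:ℝ) < b ^ p := Real.rpow_pos_of_pos hb p
  have hap : a ^ p = u ^ p * b ^ p := by
    rw [← Real.mul_rpow hu0 hb.le, hub]
  have e1 : (1 - u) * b ^ p = b ^ α := by
    have hbα : b ^ α = b ^ p / b := by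
      have h : α = p - 1 := by rw [hpdef]; ring
      rw [h, Real.rpow_sub hb, Real.rpow_one]
    have h1u : 1 - u = 1 / b := by
      rw [eq_div_iff hb.ne', h1mu]
    rw [h1u, hbα]; ring
  calc p * b ^ α + a ^ p = p * ((1 - u) * b ^ p) + u ^ p * b ^ p := by rw [e1, hap]
    _ ≤ p * ((1 - u) * b ^ p) + (p * u + (1 - p)) * b ^ p := by
        exact (add_le_add_iff_left _).mpr (mul_le_mul_of_nonneg_right hgm hbp.le)
    _ = b ^ p := by ring

lemma sum_max_rpow_le {α : ℝ} (hα : -1 < α) (hα0 : α < 0) (m : ℕ) :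
    ∑ k ∈ Finset.range (m+1), (max 1 (k:ℝ)) ^ α ≤ 1 + (m:ℝ)^(1+α) / (1+α) := by
  have hp : (0:ℝ) < 1 + α := by linarith
  induction m with
  | zero =>
    simp [Real.zero_rpow hp.ne']
  | succ m ih =>
    rw [Finset.sum_range_succ]
    have hcast : ((m+1:ℕ):ℝ) = (m:ℝ) + 1 := by push_cast; ring
    have hmax : max 1 ((m+1:ℕ):ℝ) = (m:ℝ) + 1 := by
      rw [hcast]; exact max_eq_right (by linarith [(Nat.cast_nonneg m : (0:ℝ) ≤ m)])
    rw [hmax, hcast]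
    have hstep := rpow_step hα hα0 m
    have h2 : ((m:ℝ)+1)^α ≤ ((m:ℝ)+1)^(1+α) / (1+α) - (m:ℝ)^(1+α) / (1+α) := by
      rw [div_sub_div_same, le_div_iff₀ hp]
      linarith
    linarith

set_option maxHeartbeats 1000000 in
lemma bounds_neg (d : ℕ) (hd : 1 ≤ d) (α : ℝ) (hα : -1 < α) (hα0 : α < 0) :
    ∃ C : ℝ, 1 ≤ C ∧ ∀ x y : Fin d → ℤ, x ≠ y →
      ∀ (m : ℕ) (z : ℕ → Fin d → ℤ), IsPath z m → z 0 = x → z m = y → m = l1 (x - y) →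
        C⁻¹ * rhox α x ((linf (x - y) : ℕ) : ℝ) ≤
            ∑ i ∈ Finset.range m, (mu α (z i) (z (i + 1)))⁻¹ ∧
        ∑ i ∈ Finset.range m, (mu α (z i) (z (i + 1)))⁻¹ ≤
            C * rhox α x ((linf (x - y) : ℕ) : ℝ) := by
  have hd1 : (1:ℝ) ≤ d := by exact_mod_cast hd
  have hp : (0:ℝ) < 1 + α := by linarith
  set C : ℝ := ((d:ℝ)+1)^(-α) + (d:ℝ)*(2:ℝ)^(-α)
      + (2*(d:ℝ))^(-α) * (2*(d:ℝ))^(-α) * (2*(1+1/(1+α))) * (d:ℝ)^(1+α) with hCdef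
  have hT1 : (0:ℝ) < ((d:ℝ)+1)^(-α) := Real.rpow_pos_of_pos (by linarith) _
  have hT2 : (1:ℝ) ≤ (d:ℝ)*(2:ℝ)^(-α) := by
    have : (1:ℝ) ≤ (2:ℝ)^(-α) := Real.one_le_rpow (by norm_num) (by linarith)
    nlinarith
  have hT3 : (0:ℝ) < (2*(d:ℝ))^(-α) * (2*(d:ℝ))^(-α) * (2*(1+1/(1+α))) * (d:ℝ)^(1+α) := by
    have h1 : (0:ℝ) < (2*(d:ℝ))^(-α) := Real.rpow_pos_of_pos (by linarith) _
    have h2 : (0:ℝ) < (d:ℝ)^(1+α) := Real.rpow_pos_of_pos (by linarith) _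
    have h3 : (0:ℝ) < 1/(1+α) := by positivity
    have h4 : (0:ℝ) < 2*(1+1/(1+α)) := by linarith
    exact mul_pos (mul_pos (mul_pos h1 h1) h4) h2
  have hC1 : 1 ≤ C := by rw [hCdef]; linarith
  have hCpos : 0 < C := by linarith
  refine ⟨C, hC1, ?_⟩
  intro x y hxy m z hpath hz0 hzm hm
  have hxy0 : x - y ≠ 0 := sub_ne_zero.mpr hxy
  set n := linf (x - y) with hn
  have hn1 : 1 ≤ n := linf_pos hxy0
  have hnm : n ≤ m := by rw [hm]; exact linf_le_l1 _
  have hmd : m ≤ d * n := by rw [hm, hn]; exact l1_le_d_mul_linf _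
  have hm1 : 1 ≤ m := le_trans hn1 hnm
  set M : ℝ := max ((linf x : ℕ) : ℝ) ((n : ℕ) : ℝ) with hM
  have hrhox : rhox α x ((n : ℕ) : ℝ) = M ^ α * n := rfl
  have hnR : (1:ℝ) ≤ (n:ℝ) := by exact_mod_cast hn1
  have hM1 : (1:ℝ) ≤ M := le_trans hnR (le_max_right _ _)
  have hMpos : (0:ℝ) < M := by linarith
  have hMx : ((linf x : ℕ) : ℝ) ≤ M := le_max_left _ _
  have hMn : ((n : ℕ) : ℝ) ≤ M := le_max_right _ _
  have hMα : (0:ℝ) < M ^ α := Real.rpow_pos_of_pos hMpos α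
  have hsum : ∑ i ∈ Finset.range m, (mu α (z i) (z (i + 1)))⁻¹
      = ∑ i ∈ Finset.range m, ((max (linf (z i)) (linf (z (i+1))) : ℕ) : ℝ) ^ α :=
    Finset.sum_congr rfl fun i hi => mu_inv_eq α hpath (Finset.mem_range.mp hi)
  have hzx : ∀ i, i ≤ m → l1 (z i - x) ≤ i := by
    intro i hi
    have := path_l1_le hpath 0 i (by omega)
    simpa [hz0] using this
  have hKpos : ∀ i, i < m → (0:ℝ) < ((max (linf (z i)) (linf (z (i+1))) : ℕ) : ℝ) := by
    intro i hi
    exact_mod_cast K_pos hpath hi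
  rw [hsum, hrhox]
  constructor
  · -- lower bound
    have hKle : ∀ i, i < m →
        ((max (linf (z i)) (linf (z (i+1))) : ℕ) : ℝ) ≤ ((d:ℝ)+1) * M := by
      intro i hi
      have h1 : linf (z i) ≤ linf x + l1 (z i - x) := linf_le_linf_add_l1 _ _
      have h2 : linf (z (i+1)) ≤ linf x + l1 (z (i+1) - x) := linf_le_linf_add_l1 _ _
      have h3 := hzx i (by omega)
      have h4 := hzx (i+1) (by omega)
      have h5 : (max (linf (z i)) (linf (z (i+1))) : ℕ) ≤ linf x + m := by omega
      have h5R : ((max (linf (z i)) (linf (z (i+1))) : ℕ) : ℝ) ≤ ((linf x : ℕ):ℝ) + (m:ℝ) := by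
        exact_mod_cast h5
      have hmR : (m:ℝ) ≤ (d:ℝ) * (n:ℝ) := by exact_mod_cast hmd
      have hdn : (d:ℝ) * (n:ℝ) ≤ (d:ℝ) * M := by
        apply mul_le_mul_of_nonneg_left hMn (by positivity)
      linarith
    have hCinv : C⁻¹ ≤ ((d:ℝ)+1)^α := by
      have h1 : ((d:ℝ)+1)^(-α) = (((d:ℝ)+1)^α)⁻¹ := Real.rpow_neg (by linarith) α
      have h2 : ((d:ℝ)+1)^(-α) ≤ C := by rw [hCdef]; linarith
      calc C⁻¹ ≤ (((d:ℝ)+1)^(-α))⁻¹ := inv_anti₀ hT1 h2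
        _ = ((d:ℝ)+1)^α := by rw [h1, inv_inv]
    have h5 : (m:ℝ) * (((d:ℝ)+1) * M)^α ≤
        ∑ i ∈ Finset.range m, ((max (linf (z i)) (linf (z (i+1))) : ℕ) : ℝ) ^ α := by
      have := Finset.card_nsmul_le_sum (Finset.range m)
        (fun i => ((max (linf (z i)) (linf (z (i+1))) : ℕ) : ℝ) ^ α) ((((d:ℝ)+1) * M)^α)
        (fun i hi => Real.rpow_le_rpow_of_nonpos (hKpos i (Finset.mem_range.mp hi))
          (hKle i (Finset.mem_range.mp hi)) hα0.le)
      rwa [Finset.card_range, nsmul_eq_mul] at this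
    have h6 : C⁻¹ * (M ^ α * ↑n) ≤ (m:ℝ) * (((d:ℝ)+1) * M)^α := by
      have he : (((d:ℝ)+1) * M)^α = ((d:ℝ)+1)^α * M^α :=
        Real.mul_rpow (by linarith) hMpos.le
      have hmn : (n:ℝ) ≤ (m:ℝ) := by exact_mod_cast hnm
      calc C⁻¹ * (M ^ α * ↑n) ≤ ((d:ℝ)+1)^α * (M ^ α * ↑n) := by
            apply mul_le_mul_of_nonneg_right hCinv (by positivity)
        _ = (n:ℝ) * (((d:ℝ)+1)^α * M^α) := by ring
        _ ≤ (m:ℝ) * (((d:ℝ)+1)^α * M^α) := by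
            apply mul_le_mul_of_nonneg_right hmn (by positivity)
        _ = (m:ℝ) * (((d:ℝ)+1) * M)^α := by rw [he]
    linarith
  · -- upper bound
    rcases le_or_gt (2*m) (linf x) with hbig | hsmall
    · -- far case: all K_i ≥ M/2
      have hMeq : M = ((linf x : ℕ) : ℝ) := by
        apply max_eq_left
        have : n ≤ linf x := by omega
        exact_mod_cast this
      have hedge : ∀ i ∈ Finset.range m,
          ((max (linf (z i)) (linf (z (i+1))) : ℕ) : ℝ) ^ α ≤ (M/2)^α := by
        intro i hi
        rw [Finset.mem_range] at hi
        have h1 : linf x ≤ linf (z i) + l1 (x - z i) := linf_le_linf_add_l1 _ _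
        have h2 : l1 (x - z i) ≤ i := by rw [l1_sub_comm]; exact hzx i (by omega)
        have hnat : linf x ≤ 2 * max (linf (z i)) (linf (z (i+1))) := by omega
        have hnatR : ((linf x : ℕ):ℝ) ≤ 2 * ((max (linf (z i)) (linf (z (i+1))) : ℕ) : ℝ) := by
          exact_mod_cast hnat
        apply Real.rpow_le_rpow_of_nonpos (by positivity) ?_ hα0.le
        rw [hMeq]
        linarith
      have h2α : (0:ℝ) < (2:ℝ)^α := Real.rpow_pos_of_pos (by norm_num) α
      calc ∑ i ∈ Finset.range m, ((max (linf (z i)) (linf (z (i+1))) : ℕ) : ℝ) ^ α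
          ≤ ∑ _i ∈ Finset.range m, (M/2) ^ α := Finset.sum_le_sum hedge
        _ = (m:ℝ) * (M/2)^α := by rw [Finset.sum_const, Finset.card_range, nsmul_eq_mul]
        _ ≤ ((d:ℝ)*(n:ℝ)) * (M/2)^α := by
            apply mul_le_mul_of_nonneg_right (by exact_mod_cast hmd) (by positivity)
        _ = ((d:ℝ) * (2:ℝ)^(-α)) * (M^α * (n:ℝ)) := by
            rw [Real.div_rpow hMpos.le (by norm_num), Real.rpow_neg (by norm_num : (0:ℝ) ≤ 2)]
            field_simp
        _ ≤ C * (M^α * (n:ℝ)) := by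
            apply mul_le_mul_of_nonneg_right ?_ (by positivity)
            rw [hCdef]; linarith
    · -- near case
      have hM2m : M ≤ 2*(m:ℝ) := by
        apply max_le
        · exact_mod_cast hsmall.le
        · have : n ≤ 2*m := by omega
          exact_mod_cast this
      have hgeo : l1 (z m - z 0) = m := by
        rw [hzm, hz0, l1_sub_comm]
        exact hm.symm
      obtain ⟨i₀, hi₀mem, hi₀min⟩ := Finset.exists_min_image (Finset.range (m+1))
        (fun i => linf (z i)) ⟨0, by simp⟩
      have hi₀ : i₀ ≤ m := by
        have := Finset.mem_range.mp hi₀mem; omega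
      -- separation: |i - i₀| ≤ 2 d linf(z i)
      have hsep : ∀ i, i ≤ m → i ≤ i₀ + 2*d*(linf (z i)) ∧ i₀ ≤ i + 2*d*(linf (z i)) := by
        intro i hi
        have hmin : linf (z i₀) ≤ linf (z i) := hi₀min i (Finset.mem_range.mpr (by omega))
        have hmul : d * linf (z i₀) ≤ d * linf (z i) := Nat.mul_le_mul_left d hmin
        have h3 : l1 (z i₀) ≤ d * linf (z i₀) := l1_le_d_mul_linf _
        have h4 : l1 (z i) ≤ d * linf (z i) := l1_le_d_mul_linf _
        have h6 : l1 (z i₀) + l1 (z i) ≤ 2*d*(linf (z i)) := by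
          calc l1 (z i₀) + l1 (z i) ≤ d * linf (z i) + d * linf (z i) := by omega
            _ = 2*d*(linf (z i)) := by ring
        rcases le_total i i₀ with h | h
        · have h1 : i₀ - i ≤ l1 (z i₀ - z i) := geodesic_l1_ge hpath hgeo h hi₀
          have h2 : l1 (z i₀ - z i) ≤ l1 (z i₀) + l1 (z i) := l1_sub_le _ _
          omega
        · have h1 : i - i₀ ≤ l1 (z i - z i₀) := geodesic_l1_ge hpath hgeo h hi
          have h2 : l1 (z i - z i₀) ≤ l1 (z i) + l1 (z i₀) := l1_sub_le _ _
          omega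
      -- edgewise bound by g(D i) where D i = |i - i₀|
      set D : ℕ → ℕ := fun i => (i - i₀) + (i₀ - i) with hD
      set g : ℕ → ℝ := fun k => (max 1 (k:ℝ)) ^ α with hg
      have hgnn : ∀ k, 0 ≤ g k := fun k => Real.rpow_nonneg (by positivity) α
      have hdpos : (0:ℝ) < 2*(d:ℝ) := by linarith
      have hedge : ∀ i ∈ Finset.range m,
          ((max (linf (z i)) (linf (z (i+1))) : ℕ) : ℝ) ^ α ≤ (2*(d:ℝ))^(-α) * g (D i) := by
        intro i hi
        rw [Finset.mem_range] at hi
        have hK1 := K_pos hpath hi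
        have hsepi := hsep i (by omega)
        have hlinf_le : linf (z i) ≤ max (linf (z i)) (linf (z (i+1))) := Nat.le_max_left _ _
        have hDnat : D i ≤ 2*d*(max (linf (z i)) (linf (z (i+1)))) := by
          have := Nat.mul_le_mul_left (2*d) hlinf_le
          simp only [hD]
          omega
        have hDR : ((D i : ℕ):ℝ) ≤ 2*(d:ℝ)*((max (linf (z i)) (linf (z (i+1))) : ℕ) : ℝ) := by
          exact_mod_cast hDnat
        have hK1R : (1:ℝ) ≤ ((max (linf (z i)) (linf (z (i+1))) : ℕ) : ℝ) := by
          exact_mod_cast hK1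
        set t : ℝ := max 1 ((D i : ℝ)/(2*(d:ℝ))) with ht
        have htpos : 0 < t := lt_of_lt_of_le one_pos (le_max_left _ _)
        have htK : t ≤ ((max (linf (z i)) (linf (z (i+1))) : ℕ) : ℝ) := by
          apply max_le hK1R
          rw [div_le_iff₀ hdpos]
          linarith
        have hstep1 : ((max (linf (z i)) (linf (z (i+1))) : ℕ) : ℝ) ^ α ≤ t ^ α :=
          Real.rpow_le_rpow_of_nonpos htpos htK hα0.le
        have hq : max 1 ((D i:ℝ)) / (2*(d:ℝ)) ≤ t := by
          rw [ht, ← max_div_div_right hdpos.le]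
          apply max_le_max _ le_rfl
          rw [div_le_one hdpos]
          linarith
        have hqpos : 0 < max 1 ((D i:ℝ)) / (2*(d:ℝ)) := by positivity
        have hstep2 : t ^ α ≤ (max 1 ((D i:ℝ)) / (2*(d:ℝ))) ^ α :=
          Real.rpow_le_rpow_of_nonpos hqpos hq hα0.le
        have hstep3 : (max 1 ((D i:ℝ)) / (2*(d:ℝ))) ^ α = (2*(d:ℝ))^(-α) * g (D i) := by
          rw [Real.div_rpow (by positivity) hdpos.le, Real.rpow_neg hdpos.le]
          rw [hg]
          ring
        linarith
    -- sum the reindexed bound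
      have hsum2 : ∑ i ∈ Finset.range m, g (D i) ≤ 2 * ∑ k ∈ Finset.range (m+1), g k := by
        have hsplit := Finset.sum_filter_add_sum_filter_not (Finset.range m) (· < i₀)
          (fun i => g (D i))
        have hS1 : ∑ i ∈ (Finset.range m).filter (· < i₀), g (D i) ≤
            ∑ k ∈ Finset.range (m+1), g k := by
          have he1 : ∀ i ∈ (Finset.range m).filter (· < i₀), g (D i) = g (i₀ - i) := by
            intro i hi
            rw [Finset.mem_filter, Finset.mem_range] at hi
            congr 1
            simp only [hD]
            omega
          rw [Finset.sum_congr rfl he1]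
          rw [← Finset.sum_image (g := fun i => i₀ - i) (f := g) ?inj]
          case inj =>
            intro a ha b hb hab
            rw [Finset.mem_coe, Finset.mem_filter] at ha hb
            have hab' : i₀ - a = i₀ - b := hab
            omega
          apply Finset.sum_le_sum_of_subset_of_nonneg ?sub (fun k _ _ => hgnn k)
          intro k hk
          rw [Finset.mem_image] at hk
          obtain ⟨i, hi, rfl⟩ := hk
          rw [Finset.mem_range]
          show i₀ - i < m + 1
          omega
        have hS2 : ∑ i ∈ (Finset.range m).filter (fun i => ¬ (i < i₀)), g (D i) ≤
            ∑ k ∈ Finset.range (m+1), g k := by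
          have he2 : ∀ i ∈ (Finset.range m).filter (fun i => ¬ (i < i₀)), g (D i) = g (i - i₀) := by
            intro i hi
            rw [Finset.mem_filter, Finset.mem_range] at hi
            congr 1
            simp only [hD]
            omega
          rw [Finset.sum_congr rfl he2]
          rw [← Finset.sum_image (g := fun i => i - i₀) (f := g) ?inj2]
          case inj2 =>
            intro a ha b hb hab
            rw [Finset.mem_coe, Finset.mem_filter] at ha hb
            have hab' : a - i₀ = b - i₀ := hab
            omega
          apply Finset.sum_le_sum_of_subset_of_nonneg ?sub2 (fun k _ _ => hgnn k)
          intro k hk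
          rw [Finset.mem_image] at hk
          obtain ⟨i, hi, rfl⟩ := hk
          rw [Finset.mem_filter, Finset.mem_range] at hi
          rw [Finset.mem_range]
          show i - i₀ < m + 1
          omega
        linarith
      have hsum3 : ∑ k ∈ Finset.range (m+1), g k ≤ (1 + 1/(1+α)) * (m:ℝ)^(1+α) := by
        have h1 := sum_max_rpow_le hα hα0 m
        have hm1R : (1:ℝ) ≤ (m:ℝ) := by exact_mod_cast hm1
        have h2 : (1:ℝ) ≤ (m:ℝ)^(1+α) := Real.one_le_rpow hm1R hp.le
        calc ∑ k ∈ Finset.range (m+1), g k ≤ 1 + (m:ℝ)^(1+α) / (1+α) := h1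
          _ ≤ (m:ℝ)^(1+α) + (m:ℝ)^(1+α) / (1+α) := by linarith
          _ = (1 + 1/(1+α)) * (m:ℝ)^(1+α) := by field_simp
      have hmp : (m:ℝ)^(1+α) ≤ (d:ℝ)^(1+α) * ((n:ℝ) * (n:ℝ)^α) := by
        have hmdn : (m:ℝ) ≤ (d:ℝ)*(n:ℝ) := by exact_mod_cast hmd
        have h1 : (m:ℝ)^(1+α) ≤ ((d:ℝ)*(n:ℝ))^(1+α) :=
          Real.rpow_le_rpow (by positivity) hmdn hp.le
        have h2 : ((d:ℝ)*(n:ℝ))^(1+α) = (d:ℝ)^(1+α) * (n:ℝ)^(1+α) :=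
          Real.mul_rpow (by positivity) (by positivity)
        have h3 : (n:ℝ)^(1+α) = (n:ℝ) * (n:ℝ)^α := by
          rw [Real.rpow_add (by linarith : (0:ℝ) < (n:ℝ)), Real.rpow_one]
        rw [h2, h3] at h1
        exact h1
      have hnα : (n:ℝ)^α ≤ (2*(d:ℝ))^(-α) * M^α := by
        have hMn2 : M / (2*(d:ℝ)) ≤ (n:ℝ) := by
          rw [div_le_iff₀ hdpos]
          have hmdn : (m:ℝ) ≤ (d:ℝ)*(n:ℝ) := by exact_mod_cast hmd
          nlinarith
        have hpos2 : 0 < M / (2*(d:ℝ)) := by positivity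
        have h1 : (n:ℝ)^α ≤ (M / (2*(d:ℝ)))^α :=
          Real.rpow_le_rpow_of_nonpos hpos2 hMn2 hα0.le
        have h2 : (M / (2*(d:ℝ)))^α = (2*(d:ℝ))^(-α) * M^α := by
          rw [Real.div_rpow hMpos.le hdpos.le, Real.rpow_neg hdpos.le]
          ring
        rw [h2] at h1
        exact h1
      -- combine everything
      have hfinal : ∑ i ∈ Finset.range m, ((max (linf (z i)) (linf (z (i+1))) : ℕ) : ℝ) ^ α
          ≤ (2*(d:ℝ))^(-α) * (2 * ((1 + 1/(1+α)) * ((d:ℝ)^(1+α) * ((n:ℝ) * (n:ℝ)^α)))) := by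
        have hA : (0:ℝ) ≤ (2*(d:ℝ))^(-α) := (Real.rpow_pos_of_pos hdpos _).le
        calc ∑ i ∈ Finset.range m, ((max (linf (z i)) (linf (z (i+1))) : ℕ) : ℝ) ^ α
            ≤ ∑ i ∈ Finset.range m, (2*(d:ℝ))^(-α) * g (D i) := Finset.sum_le_sum hedge
          _ = (2*(d:ℝ))^(-α) * ∑ i ∈ Finset.range m, g (D i) := by rw [Finset.mul_sum]
          _ ≤ (2*(d:ℝ))^(-α) * (2 * ∑ k ∈ Finset.range (m+1), g k) := by
              apply mul_le_mul_of_nonneg_left ?_ hA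
              have : (0:ℝ) ≤ ∑ k ∈ Finset.range (m+1), g k :=
                Finset.sum_nonneg fun k _ => hgnn k
              linarith [hsum2]
          _ ≤ (2*(d:ℝ))^(-α) * (2 * ((1 + 1/(1+α)) * (m:ℝ)^(1+α))) := by
              apply mul_le_mul_of_nonneg_left ?_ hA
              have h3 : (0:ℝ) < 1 + 1/(1+α) := by positivity
              nlinarith [hsum3]
          _ ≤ (2*(d:ℝ))^(-α) * (2 * ((1 + 1/(1+α)) * ((d:ℝ)^(1+α) * ((n:ℝ) * (n:ℝ)^α)))) := by
              apply mul_le_mul_of_nonneg_left ?_ hA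
              have h3 : (0:ℝ) < 1 + 1/(1+α) := by positivity
              nlinarith [hmp]
      have hlast : (2*(d:ℝ))^(-α) * (2 * ((1 + 1/(1+α)) * ((d:ℝ)^(1+α) * ((n:ℝ) * (n:ℝ)^α))))
          ≤ C * (M ^ α * (n:ℝ)) := by
        have hA : (0:ℝ) < (2*(d:ℝ))^(-α) := Real.rpow_pos_of_pos hdpos _
        have hB : (0:ℝ) < (d:ℝ)^(1+α) := Real.rpow_pos_of_pos (by linarith) _
        have h3 : (0:ℝ) < 1 + 1/(1+α) := by positivity
        have hnpos : (0:ℝ) < (n:ℝ) := by linarith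
        have hC3 : (2*(d:ℝ))^(-α) * (2*(d:ℝ))^(-α) * (2*(1+1/(1+α))) * (d:ℝ)^(1+α) ≤ C := by
          rw [hCdef]
          nlinarith
        calc (2*(d:ℝ))^(-α) * (2 * ((1 + 1/(1+α)) * ((d:ℝ)^(1+α) * ((n:ℝ) * (n:ℝ)^α))))
            ≤ (2*(d:ℝ))^(-α) * (2 * ((1 + 1/(1+α)) * ((d:ℝ)^(1+α) *
                ((n:ℝ) * ((2*(d:ℝ))^(-α) * M^α))))) := by
              have s1 := mul_le_mul_of_nonneg_left hnα hnpos.le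
              have s2 := mul_le_mul_of_nonneg_left s1 hB.le
              have s3 := mul_le_mul_of_nonneg_left s2 h3.le
              have s4 := mul_le_mul_of_nonneg_left s3 (by norm_num : (0:ℝ) ≤ 2)
              exact mul_le_mul_of_nonneg_left s4 hA.le
          _ = ((2*(d:ℝ))^(-α) * (2*(d:ℝ))^(-α) * (2*(1+1/(1+α))) * (d:ℝ)^(1+α)) *
                (M ^ α * (n:ℝ)) := by ring
          _ ≤ C * (M ^ α * (n:ℝ)) := by
              apply mul_le_mul_of_nonneg_right hC3 (by positivity)
      exact hfinal.trans hlast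

/-- There is `c₁ ∈ (0,1]`, depending only on `α` and `d`, such that
for all `x ≠ y` and every L¹-geodesic `z_0, …, z_m` from `x` to `y`,
`c₁ ρ_x(|x-y|) ≤ ∑_{i=0}^{m-1} μ_{z_i z_{i+1}}⁻¹ ≤ c₁⁻¹ ρ_x(|x-y|)`. -/
theorem geodesic_edge_resistance (d : ℕ) (hd : 1 ≤ d) (α : ℝ) (hα : -1 < α) :
    ∃ c₁ : ℝ, 0 < c₁ ∧ c₁ ≤ 1 ∧
      ∀ x y : Fin d → ℤ, x ≠ y →
        ∀ (m : ℕ) (z : ℕ → Fin d → ℤ), IsPath z m → z 0 = x → z m = y →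
          m = l1 (x - y) →
          c₁ * rhox α x ((linf (x - y) : ℕ) : ℝ) ≤
              ∑ i ∈ Finset.range m, (mu α (z i) (z (i + 1)))⁻¹ ∧
            ∑ i ∈ Finset.range m, (mu α (z i) (z (i + 1)))⁻¹ ≤
              c₁⁻¹ * rhox α x ((linf (x - y) : ℕ) : ℝ) := by
  rcases le_or_gt 0 α with hα0 | hα0
  · obtain ⟨C, hC1, hC⟩ := bounds_pos d hd α hα0
    have hCpos : (0:ℝ) < C := lt_of_lt_of_le one_pos hC1
    refine ⟨C⁻¹, inv_pos.mpr hCpos, inv_le_one_of_one_le₀ hC1, ?_⟩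
    intro x y hxy m z hpath hz0 hzm hm
    obtain ⟨h1, h2⟩ := hC x y hxy m z hpath hz0 hzm hm
    rw [inv_inv]
    exact ⟨h1, h2⟩
  · obtain ⟨C, hC1, hC⟩ := bounds_neg d hd α hα hα0
    have hCpos : (0:ℝ) < C := lt_of_lt_of_le one_pos hC1
    refine ⟨C⁻¹, inv_pos.mpr hCpos, inv_le_one_of_one_le₀ hC1, ?_⟩
    intro x y hxy m z hpath hz0 hzm hm
    obtain ⟨h1, h2⟩ := hC x y hxy m z hpath hz0 hzm hm
    rw [inv_inv]
    exact ⟨h1, h2⟩
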